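/- Every orthogonal factorization system on a category is also a weak factorization system; conversely, a weak factorization system (L, R) is an orthogonal factorization system if and only if for every map f in L the codiagonal ∇_f also lies in L. -/

import Mathlib

open CategoryTheory CategoryTheory.Limits

variable {C : Type u} [Category.{v} C]

/-- The codiagonal `∇_f : B +_A B ⟶ B` of `f : A ⟶ B`. -/
noncomputable def codiagonal [HasPushouts C] {A B : C} (f : A ⟶ B) :
    pushout f f ⟶ B :=
  pushout.desc (𝟙 B) (𝟙 B) rfl

/-- `l` has the (weak) left lifting property with respect to `r`. -/
def HasWeakLift {A B X Y : C} (l : A ⟶ B) (r : X ⟶ Y) : Prop :=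
  ∀ (f : A ⟶ X) (g : B ⟶ Y), f ≫ r = l ≫ g →
    ∃ h : B ⟶ X, l ≫ h = f ∧ h ≫ r = g

/-- `l` has the unique left lifting property with respect to `r`. -/
def HasUniqueLift {A B X Y : C} (l : A ⟶ B) (r : X ⟶ Y) : Prop :=
  ∀ (f : A ⟶ X) (g : B ⟶ Y), f ≫ r = l ≫ g →
    ∃! h : B ⟶ X, l ≫ h = f ∧ h ≫ r = g

/-- `(L, R)` is a weak factorization system. -/
def IsWFS (L R : MorphismProperty C) : Prop :=
  (∀ {A B : C} (l : A ⟶ B),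
      L l ↔ ∀ {X Y : C} (r : X ⟶ Y), R r → HasWeakLift l r) ∧
  (∀ {X Y : C} (r : X ⟶ Y),
      R r ↔ ∀ {A B : C} (l : A ⟶ B), L l → HasWeakLift l r) ∧
  (∀ {A B : C} (f : A ⟶ B),
      ∃ (Z : C) (g : A ⟶ Z) (h : Z ⟶ B), L g ∧ R h ∧ g ≫ h = f)

/-- `(L, R)` is an orthogonal factorization system. -/
def IsOFS (L R : MorphismProperty C) : Prop :=
  (∀ {A B : C} (l : A ⟶ B),
      L l ↔ ∀ {X Y : C} (r : X ⟶ Y), R r → HasUniqueLift l r) ∧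
  (∀ {X Y : C} (r : X ⟶ Y),
      R r ↔ ∀ {A B : C} (l : A ⟶ B), L l → HasUniqueLift l r) ∧
  (∀ {A B : C} (f : A ⟶ B),
      ∃ (Z : C) (g : A ⟶ Z) (h : Z ⟶ B), L g ∧ R h ∧ g ≫ h = f)

section Aux

variable [HasPushouts C]

lemma unique_of_codiag {L R : MorphismProperty C} (hW : IsWFS L R)
    (hcd : ∀ {A B : C} (f : A ⟶ B), L f → L (codiagonal f))
    {A B X Y : C} {l : A ⟶ B} {r : X ⟶ Y} (hl : L l) (hr : R r) :
    HasUniqueLift l r := by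
  intro f g sq
  obtain ⟨h, h1, h2⟩ := (hW.1 l).mp hl r hr f g sq
  refine ⟨h, ⟨h1, h2⟩, ?_⟩
  intro t ⟨t1, t2⟩
  -- use the codiagonal of l to show t = h
  have hcl : L (codiagonal l) := hcd l hl
  set u : pushout l l ⟶ X := pushout.desc t h (t1.trans h1.symm) with hu
  have sq2 : u ≫ r = codiagonal l ≫ g := by
    apply pushout.hom_ext
    · rw [hu, codiagonal, ← Category.assoc, ← Category.assoc, pushout.inl_desc, pushout.inl_desc, Category.id_comp, t2]
    · rw [hu, codiagonal, ← Category.assoc, ← Category.assoc, pushout.inr_desc, pushout.inr_desc, Category.id_comp, h2]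
  obtain ⟨d, d1, d2⟩ := (hW.1 (codiagonal l)).mp hcl r hr u g sq2
  have e1 : pushout.inl l l ≫ codiagonal l = 𝟙 B := pushout.inl_desc _ _ _
  have e2 : pushout.inr l l ≫ codiagonal l = 𝟙 B := pushout.inr_desc _ _ _
  have ht : t = d := by
    have := congrArg (fun z => pushout.inl l l ≫ z) d1
    beta_reduce at this; rw [← Category.assoc, e1, Category.id_comp, hu, pushout.inl_desc] at this; exact this.symm
  have hh : h = d := by
    have := congrArg (fun z => pushout.inr l l ≫ z) d1
    beta_reduce at this; rw [← Category.assoc, e2, Category.id_comp, hu, pushout.inr_desc] at this; exact this.symm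
  rw [ht, hh]

lemma ofs_to_wfs {L R : MorphismProperty C} (hO : IsOFS L R) : IsWFS L R := by
  obtain ⟨hL, hR, hfact⟩ := hO
  refine ⟨?_, ?_, hfact⟩
  · intro A B l
    constructor
    · intro hl X Y r hr f g sq
      obtain ⟨h, hh, -⟩ := (hL l).mp hl r hr f g sq
      exact ⟨h, hh⟩
    · intro hlift
      obtain ⟨Z, g, h, hg, hh, hgh⟩ := hfact l
      obtain ⟨k, hk1, hk2⟩ := hlift h hh g (𝟙 B) (by simp [hgh])
      refine (hL l).mpr ?_
      intro X Y r hr f g' sq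
      obtain ⟨d, ⟨hd1, hd2⟩, hdu⟩ := (hL g).mp hg r hr f (h ≫ g')
        (by rw [← Category.assoc, hgh, sq])
      refine ⟨k ≫ d, ⟨by rw [← Category.assoc, hk1, hd1],
        by rw [Category.assoc, hd2, ← Category.assoc, hk2, Category.id_comp]⟩, ?_⟩
      rintro t ⟨ht1, ht2⟩
      have hht : h ≫ t = d := hdu _ ⟨by rw [← Category.assoc, hgh, ht1],
        by rw [Category.assoc, ht2]⟩
      calc t = (k ≫ h) ≫ t := by rw [hk2, Category.id_comp]
        _ = k ≫ d := by rw [Category.assoc, hht]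
  · intro X Y r
    constructor
    · intro hr A B l hl f g sq
      obtain ⟨h, hh, -⟩ := (hR r).mp hr l hl f g sq
      exact ⟨h, hh⟩
    · intro hlift
      obtain ⟨Z, g, h, hg, hh, hgh⟩ := hfact r
      obtain ⟨k, hk1, hk2⟩ := hlift g hg (𝟙 X) h (by simp [hgh])
      refine (hR r).mpr ?_
      intro A B l hl f g' sq
      obtain ⟨d, ⟨hd1, hd2⟩, hdu⟩ := (hR h).mp hh l hl (f ≫ g) g'
        (by rw [Category.assoc, hgh, sq])
      refine ⟨d ≫ k, ⟨by rw [← Category.assoc, hd1, Category.assoc, hk1, Category.comp_id],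
        by rw [Category.assoc, hk2, hd2]⟩, ?_⟩
      rintro t ⟨ht1, ht2⟩
      have hht : t ≫ g = d := hdu _ ⟨by rw [← Category.assoc, ht1],
        by rw [Category.assoc, hgh, ht2]⟩
      calc t = t ≫ g ≫ k := by rw [hk1, Category.comp_id]
        _ = d ≫ k := by rw [← Category.assoc, hht]

end Aux

/-- Every orthogonal factorization system is a weak factorization system, and a
weak factorization system `(L, R)` is orthogonal if and only if `L` is stable
under codiagonals. -/
theorem ofs_is_wfs_and_wfs_ofs_iff_codiagonal [HasPushouts C] :
    (∀ L R : MorphismProperty C, IsOFS L R → IsWFS L R) ∧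
    (∀ L R : MorphismProperty C, IsWFS L R →
      (IsOFS L R ↔ ∀ {A B : C} (f : A ⟶ B), L f → L (codiagonal f))) := by
  refine ⟨fun L R hO => ofs_to_wfs hO, fun L R hW => ⟨?_, ?_⟩⟩
  · -- OFS → codiagonal stability
    intro hO A B f hf
    refine (hO.1 (codiagonal f)).mpr ?_
    intro X Y r hr u v sq
    have e1 : pushout.inl f f ≫ codiagonal f = 𝟙 B := pushout.inl_desc _ _ _
    have e2 : pushout.inr f f ≫ codiagonal f = 𝟙 B := pushout.inr_desc _ _ _
    -- both restrictions of u are lifts for the square of f against r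
    have sqf : (f ≫ pushout.inl f f ≫ u) ≫ r = f ≫ v := by
      rw [Category.assoc, Category.assoc, sq]; rw [← Category.assoc (pushout.inl f f), e1, Category.id_comp]
    obtain ⟨d, -, hdu⟩ := (hO.1 f).mp hf r hr (f ≫ pushout.inl f f ≫ u) v sqf
    have h12 : pushout.inl f f ≫ u = pushout.inr f f ≫ u := by
      have k1 : pushout.inl f f ≫ u = d := hdu _ ⟨rfl,
        by rw [Category.assoc, sq, ← Category.assoc, e1, Category.id_comp]⟩
      have k2 : pushout.inr f f ≫ u = d := hdu _
        ⟨by rw [← Category.assoc, ← Category.assoc, pushout.condition],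
         by rw [Category.assoc, sq, ← Category.assoc, e2, Category.id_comp]⟩
      rw [k1, k2]
    refine ⟨pushout.inl f f ≫ u, ⟨?_, ?_⟩, ?_⟩
    · apply pushout.hom_ext
      · rw [← Category.assoc, e1, Category.id_comp]
      · rw [← Category.assoc, e2, Category.id_comp, h12]
    · rw [Category.assoc, sq, ← Category.assoc, e1, Category.id_comp]
    · rintro t ⟨ht1, -⟩
      rw [← ht1, ← Category.assoc, e1, Category.id_comp]
  · -- codiagonal stability → OFS
    intro hcd
    refine ⟨?_, ?_, hW.2.2⟩
    · intro A B l
      constructor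
      · intro hl X Y r hr
        exact unique_of_codiag hW hcd hl hr
      · intro hlift
        refine (hW.1 l).mpr ?_
        intro X Y r hr f g sq
        obtain ⟨h, hh, -⟩ := hlift r hr f g sq
        exact ⟨h, hh⟩
    · intro X Y r
      constructor
      · intro hr A B l hl
        exact unique_of_codiag hW hcd hl hr
      · intro hlift
        refine (hW.2.1 r).mpr ?_
        intro A B l hl f g sq
        obtain ⟨h, hh, -⟩ := hlift l hl f g sq
        exact ⟨h, hh⟩
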